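/- Let 0 < α < 1, n > K₁(α) = max{α/(1-α), (1-α)/α}, and j even with 2 ≤ j ≤ n. Then the map f(x) = ((j-1)π + η_α(x))/n maps the closed interval [(j-1)π/n, jπ/n] into itself and is a contraction with Lipschitz constant K₁(α)/n < 1; hence f has a unique fixed point in this interval. -/

import Mathlib

open Real Set

set_option maxHeartbeats 1000000 in
/-- For `n > K₁(α)` and even `j`, the map `f(x) = ((j-1)π + η_α(x))/n` maps
`[(j-1)π/n, jπ/n]` into itself, is a contraction with constant `K₁(α)/n < 1`, and has a
unique fixed point in this interval. -/
theorem main_map_contraction (α : ℝ) (hα0 : 0 < α) (hα1 : α < 1)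
    (n : ℕ) (hn : 3 ≤ n) (hnK : max (α / (1 - α)) ((1 - α) / α) < n)
    (j : ℕ) (hj2 : 2 ≤ j) (hjn : j ≤ n) (hje : Even j)
    (η : ℝ → ℝ)
    (hη0 : η 0 = π) (hηπ : η π = 0)
    (hη : ∀ x ∈ Ioo (0 : ℝ) π, η x = 2 * arctan ((α / (1 - α)) * Real.cot (x / 2)))
    (f : ℝ → ℝ)
    (hf : ∀ x : ℝ, f x = ((j - 1) * π + η x) / n) :
    MapsTo f (Icc ((j - 1) * π / n) (j * π / n)) (Icc ((j - 1) * π / n) (j * π / n)) ∧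
    (∀ x ∈ Icc ((j - 1) * π / n) (j * π / n), ∀ y ∈ Icc ((j - 1) * π / n) (j * π / n),
      |f x - f y| ≤ (max (α / (1 - α)) ((1 - α) / α) / n) * |x - y|) ∧
    max (α / (1 - α)) ((1 - α) / α) / n < 1 ∧
    ∃! x, x ∈ Icc ((j - 1) * π / n) (j * π / n) ∧ f x = x := by
  have h1α : 0 < 1 - α := by linarith
  set κ : ℝ := α / (1 - α) with hκdef
  have hκ0 : 0 < κ := div_pos hα0 h1α
  have hKeq : (1 - α) / α = κ⁻¹ := by rw [hκdef, inv_div]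
  rw [hKeq] at hnK ⊢
  set K : ℝ := max κ κ⁻¹ with hKdef
  have hKκ : κ ≤ K := le_max_left _ _
  have hKinv : κ⁻¹ ≤ K := le_max_right _ _
  have hK0 : 0 < K := lt_of_lt_of_le hκ0 hKκ
  have hKκ1 : 1 ≤ K * κ := by
    have h := mul_le_mul_of_nonneg_right hKinv hκ0.le
    rwa [inv_mul_cancel₀ hκ0.ne'] at h
  clear_value κ
  have hn0 : (0 : ℝ) < n := by
    have : 0 < n := by omega
    exact_mod_cast this
  have hj1 : (2 : ℝ) ≤ (j : ℝ) := by exact_mod_cast hj2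
  have hjnR : (j : ℝ) ≤ (n : ℝ) := by exact_mod_cast hjn
  set a : ℝ := ((j : ℝ) - 1) * π / n with ha_def
  set b : ℝ := (j : ℝ) * π / n with hb_def
  have hπ0 := pi_pos
  have hab : a ≤ b := by
    rw [ha_def, hb_def]
    apply div_le_div_of_nonneg_right _ hn0.le
    nlinarith
  have ha0 : 0 < a := by
    apply div_pos _ hn0
    nlinarith
  have hbπ : b ≤ π := by
    rw [hb_def, div_le_iff₀ hn0]
    nlinarith
  have hsub : Icc a b ⊆ Ioc 0 π := fun x hx =>
    ⟨lt_of_lt_of_le ha0 hx.1, le_trans hx.2 hbπ⟩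
  -- the smooth model g
  set g : ℝ → ℝ := fun x => 2 * arctan (κ * (Real.cos (x / 2) / Real.sin (x / 2))) with hg_def
  have hsin : ∀ x ∈ Ioc (0 : ℝ) π, 0 < Real.sin (x / 2) := by
    intro x hx
    apply Real.sin_pos_of_pos_of_lt_pi (by linarith [hx.1])
    linarith [hx.2, hπ0]
  have hcos : ∀ x ∈ Ioc (0 : ℝ) π, 0 ≤ Real.cos (x / 2) := by
    intro x hx
    apply Real.cos_nonneg_of_mem_Icc
    constructor <;> [linarith [hx.1, hπ0]; linarith [hx.2]]
  have hηg : ∀ x ∈ Ioc (0 : ℝ) π, η x = g x := by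
    intro x hx
    rcases eq_or_lt_of_le hx.2 with h | h
    · rw [h, hηπ, hg_def]
      simp [Real.cos_pi_div_two]
    · rw [hη x ⟨hx.1, h⟩, hg_def, Real.cot_eq_cos_div_sin]
  have hg_mem : ∀ x ∈ Ioc (0 : ℝ) π, g x ∈ Icc (0 : ℝ) π := by
    intro x hx
    have hs := hsin x hx
    have hc := hcos x hx
    have harg : 0 ≤ κ * (Real.cos (x / 2) / Real.sin (x / 2)) := by positivity
    constructor
    · have : (0 : ℝ) ≤ arctan (κ * (Real.cos (x / 2) / Real.sin (x / 2))) := by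
        rw [← Real.arctan_zero]
        exact Real.arctan_strictMono.monotone harg
      rw [hg_def]; linarith
    · have := Real.arctan_lt_pi_div_two (κ * (Real.cos (x / 2) / Real.sin (x / 2)))
      rw [hg_def]; linarith
  -- derivative of g
  set G : ℝ → ℝ := fun x =>
    2 * (1 / (1 + (κ * (Real.cos (x / 2) / Real.sin (x / 2))) ^ 2) *
      (κ * ((-Real.sin (x / 2) * Real.sin (x / 2) - Real.cos (x / 2) * Real.cos (x / 2)) /
        Real.sin (x / 2) ^ 2 * (1 / 2)))) with hG_def
  have hg' : ∀ x ∈ Ioc (0 : ℝ) π, HasDerivAt g (G x) x := by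
    intro x hx
    have hs := (hsin x hx).ne'
    have h1 : HasDerivAt (fun y : ℝ => y / 2) (1 / 2) x := (hasDerivAt_id x).div_const 2
    have h2 : HasDerivAt (fun u : ℝ => Real.cos u / Real.sin u)
        ((-Real.sin (x / 2) * Real.sin (x / 2) - Real.cos (x / 2) * Real.cos (x / 2)) /
          Real.sin (x / 2) ^ 2) (x / 2) := by
      exact (Real.hasDerivAt_cos (x / 2)).div (Real.hasDerivAt_sin (x / 2)) hs
    have h3 : HasDerivAt (fun y : ℝ => Real.cos (y / 2) / Real.sin (y / 2))
        ((-Real.sin (x / 2) * Real.sin (x / 2) - Real.cos (x / 2) * Real.cos (x / 2)) /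
          Real.sin (x / 2) ^ 2 * (1 / 2)) x := by
        have h := h2.comp x h1
        exact h
    have h4 := (Real.hasDerivAt_arctan (κ * (Real.cos (x / 2) / Real.sin (x / 2)))).comp x
      (h3.const_mul κ)
    exact (h4.const_mul 2)
  have hGbound : ∀ x ∈ Ioc (0 : ℝ) π, |G x| ≤ K := by
    intro x hx
    have hs := hsin x hx
    have hsc : Real.sin (x / 2) ^ 2 + Real.cos (x / 2) ^ 2 = 1 := Real.sin_sq_add_cos_sq (x / 2)
    set s := Real.sin (x / 2) with hs_def
    set c := Real.cos (x / 2) with hc_def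
    have hden : 0 < s ^ 2 + κ ^ 2 * c ^ 2 := by positivity
    have hGval : G x = -(κ / (s ^ 2 + κ ^ 2 * c ^ 2)) := by
      show 2 * (1 / (1 + (κ * (c / s)) ^ 2) * (κ * ((-s * s - c * c) / s ^ 2 * (1 / 2))))
        = -(κ / (s ^ 2 + κ ^ 2 * c ^ 2))
      clear_value s c
      field_simp
      linear_combination (-1) * hsc
    rw [hGval, abs_neg, abs_of_pos (div_pos hκ0 hden), div_le_iff₀ hden]
    nlinarith [sq_nonneg s, sq_nonneg c, mul_nonneg (sub_nonneg.mpr hKκ) (sq_nonneg s),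
      mul_nonneg (mul_nonneg hκ0.le (sub_nonneg.mpr hKκ1)) (sq_nonneg c)]
  have hglip : ∀ x ∈ Ioc (0 : ℝ) π, ∀ y ∈ Ioc (0 : ℝ) π, |g x - g y| ≤ K * |x - y| := by
    intro x hx y hy
    have := (convex_Ioc (0 : ℝ) π).norm_image_sub_le_of_norm_hasDerivWithin_le
      (fun z hz => (hg' z hz).hasDerivWithinAt)
      (fun z hz => by simpa [Real.norm_eq_abs] using hGbound z hz) hy hx
    simpa [Real.norm_eq_abs] using this
  -- MapsTo
  have hmaps : MapsTo f (Icc a b) (Icc a b) := by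
    intro x hx
    have hx' := hsub hx
    have hmem := hg_mem x hx'
    rw [← hηg x hx'] at hmem
    rw [hf x]
    constructor
    · rw [ha_def]
      apply div_le_div_of_nonneg_right _ hn0.le
      linarith [hmem.1]
    · rw [hb_def]
      apply div_le_div_of_nonneg_right _ hn0.le
      linarith [hmem.2]
  -- Lipschitz
  have hLip : ∀ x ∈ Icc a b, ∀ y ∈ Icc a b, |f x - f y| ≤ K / n * |x - y| := by
    intro x hx y hy
    have hx' := hsub hx
    have hy' := hsub hy
    have h1 : f x - f y = (η x - η y) / n := by rw [hf x, hf y]; ring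
    rw [h1, hηg x hx', hηg y hy', abs_div, abs_of_pos hn0]
    rw [div_le_iff₀ hn0]
    calc |g x - g y| ≤ K * |x - y| := hglip x hx' y hy'
      _ = K / n * |x - y| * n := by field_simp
  have hlt1 : K / n < 1 := (div_lt_one hn0).mpr hnK
  refine ⟨hmaps, hLip, hlt1, ?_⟩
  -- existence via IVT
  have hfc : ContinuousOn f (Icc a b) := by
    have hL : LipschitzOnWith 1 f (Icc a b) := by
      rw [lipschitzOnWith_iff_dist_le_mul]
      intro x hx y hy
      rw [Real.dist_eq, Real.dist_eq, NNReal.coe_one, one_mul]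
      calc |f x - f y| ≤ K / n * |x - y| := hLip x hx y hy
        _ ≤ 1 * |x - y| := mul_le_mul_of_nonneg_right hlt1.le (abs_nonneg _)
        _ = |x - y| := one_mul _
    exact hL.continuousOn
  have hcont : ContinuousOn (fun x => f x - x) (Icc a b) := hfc.sub continuousOn_id
  have hamem : a ∈ Icc a b := left_mem_Icc.mpr hab
  have hbmem : b ∈ Icc a b := right_mem_Icc.mpr hab
  have hfa : a ≤ f a := (hmaps hamem).1
  have hfb : f b ≤ b := (hmaps hbmem).2
  have h0mem : (0 : ℝ) ∈ Icc (f b - b) (f a - a) := ⟨by linarith, by linarith⟩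
  obtain ⟨x, hxmem, hx0⟩ := intermediate_value_Icc' hab hcont h0mem
  have hfx : f x = x := by simpa [sub_eq_zero] using hx0
  refine ⟨x, ⟨hxmem, hfx⟩, ?_⟩
  intro y ⟨hymem, hfy⟩
  by_contra hne
  have hpos : 0 < |y - x| := abs_pos.mpr (sub_ne_zero.mpr hne)
  have h1 := hLip y hymem x hxmem
  rw [hfy, hfx] at h1
  have h2 := mul_lt_mul_of_pos_right hlt1 hpos
  rw [one_mul] at h2
  linarith
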